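/- Let a > 0, let g(x) = e^{a(x-1)}, and let S_d(x) = e^{-a}·I_0(a) + 2·e^{-a}·∑_{k=1}^{d} I_k(a)·T_k(x) be the degree-d Chebyshev partial sum of g. Then sup_{x ∈ [-1,1]} |S_d(x)| ≤ 1 and sup_{x ∈ [-1,1]} |g(x) - S_d(x)| ≤ 2·e^{-a}·∑_{k=d+1}^{∞} I_k(a). -/

import Mathlib

/-- The modified Bessel function of the first kind `I_k(a)`, defined by its
everywhere-convergent power series. -/
noncomputable def besselI (k : ℕ) (a : ℝ) : ℝ :=
  ∑' m : ℕ, (a / 2) ^ (k + 2 * m) / ((m.factorial : ℝ) * (m + k).factorial)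

/-- The degree-`d` Chebyshev partial sum of `g(x) = exp (a*(x-1))`:
`S_d(x) = e^{-a} I₀(a) + 2 e^{-a} ∑_{k=1}^{d} I_k(a) T_k(x)`. -/
noncomputable def chebPartialSum (a : ℝ) (d : ℕ) (x : ℝ) : ℝ :=
  Real.exp (-a) * besselI 0 a +
    2 * Real.exp (-a) *
      ∑ k ∈ Finset.range d, besselI (k + 1) a * (Polynomial.Chebyshev.T ℝ (k + 1)).eval x

namespace BesselAux

variable (a θ : ℝ)


/-- Cosine part of the series for `exp((a/2) e^{iθ})`. -/
noncomputable def gc (a θ : ℝ) (p : ℕ) : ℝ := (a/2)^p / (p.factorial : ℝ) * Real.cos (p*θ)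

/-- Sine part. -/
noncomputable def hs (a θ : ℝ) (p : ℕ) : ℝ := (a/2)^p / (p.factorial : ℝ) * Real.sin (p*θ)

/-- The double-series term whose sum over `ℕ×ℕ` is `exp (a cos θ)`. -/
noncomputable def FF (a θ : ℝ) (pq : ℕ × ℕ) : ℝ :=
  gc a θ pq.1 * gc a θ pq.2 + hs a θ pq.1 * hs a θ pq.2

lemma summable_base (a : ℝ) : Summable (fun p : ℕ => |a/2|^p / (p.factorial : ℝ)) :=
  Real.summable_pow_div_factorial _

lemma norm_gc_le (a θ : ℝ) (p : ℕ) : ‖gc a θ p‖ ≤ |a/2|^p / (p.factorial : ℝ) := by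
  rw [Real.norm_eq_abs, gc, abs_mul, abs_div, abs_pow]
  have h1 : |((p.factorial : ℝ))| = (p.factorial : ℝ) := abs_of_nonneg (by positivity)
  rw [h1]
  exact mul_le_of_le_one_right (by positivity) (Real.abs_cos_le_one _)

lemma norm_hs_le (a θ : ℝ) (p : ℕ) : ‖hs a θ p‖ ≤ |a/2|^p / (p.factorial : ℝ) := by
  rw [Real.norm_eq_abs, hs, abs_mul, abs_div, abs_pow]
  have h1 : |((p.factorial : ℝ))| = (p.factorial : ℝ) := abs_of_nonneg (by positivity)
  rw [h1]
  exact mul_le_of_le_one_right (by positivity) (Real.abs_sin_le_one _)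

lemma summable_norm_gc (a θ : ℝ) : Summable fun p => ‖gc a θ p‖ :=
  (summable_base a).of_nonneg_of_le (fun _ => norm_nonneg _) (norm_gc_le a θ)

lemma summable_norm_hs (a θ : ℝ) : Summable fun p => ‖hs a θ p‖ :=
  (summable_base a).of_nonneg_of_le (fun _ => norm_nonneg _) (norm_hs_le a θ)

lemma summable_gg (a θ : ℝ) : Summable fun pq : ℕ × ℕ => gc a θ pq.1 * gc a θ pq.2 :=
  summable_mul_of_summable_norm (summable_norm_gc a θ) (summable_norm_gc a θ)

lemma summable_hh (a θ : ℝ) : Summable fun pq : ℕ × ℕ => hs a θ pq.1 * hs a θ pq.2 :=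
  summable_mul_of_summable_norm (summable_norm_hs a θ) (summable_norm_hs a θ)

lemma summable_FF (a θ : ℝ) : Summable (FF a θ) :=
  (summable_gg a θ).add (summable_hh a θ)

lemma tsum_gc (a θ : ℝ) :
    ∑' p : ℕ, gc a θ p
      = (Complex.exp (((a/2 : ℝ) : ℂ) * Complex.exp ((θ:ℝ) * Complex.I))).re := by
  set z : ℂ := (a/2 : ℝ) * Complex.exp ((θ:ℝ) * Complex.I) with hz
  have hsum : Summable fun p : ℕ => z ^ p / (p.factorial : ℂ) :=
    NormedSpace.expSeries_div_summable z
  have hexp : Complex.exp z = ∑' p : ℕ, z ^ p / (p.factorial : ℂ) := by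
    rw [Complex.exp_eq_exp_ℂ, NormedSpace.exp_eq_tsum_div]
  rw [hexp, Complex.re_tsum hsum]
  congr 1; funext p
  have h1 : z ^ p = ((((a/2)^p : ℝ)) : ℂ) * Complex.exp ((p * θ : ℝ) * Complex.I) := by
    rw [hz, mul_pow, ← Complex.exp_nat_mul]
    push_cast; ring_nf
  have h2 : z ^ p / (p.factorial : ℂ)
      = (((a/2)^p / p.factorial : ℝ) : ℂ) * Complex.exp (((p:ℝ) * θ : ℝ) * Complex.I) := by
    rw [h1]; push_cast; ring
  rw [h2, Complex.re_ofReal_mul, Complex.exp_ofReal_mul_I_re]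
  rfl

lemma tsum_hs (a θ : ℝ) :
    ∑' p : ℕ, hs a θ p
      = (Complex.exp (((a/2 : ℝ) : ℂ) * Complex.exp ((θ:ℝ) * Complex.I))).im := by
  set z : ℂ := (a/2 : ℝ) * Complex.exp ((θ:ℝ) * Complex.I) with hz
  have hsum : Summable fun p : ℕ => z ^ p / (p.factorial : ℂ) :=
    NormedSpace.expSeries_div_summable z
  have hexp : Complex.exp z = ∑' p : ℕ, z ^ p / (p.factorial : ℂ) := by
    rw [Complex.exp_eq_exp_ℂ, NormedSpace.exp_eq_tsum_div]
  rw [hexp, Complex.im_tsum hsum]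
  congr 1; funext p
  have h1 : z ^ p = ((((a/2)^p : ℝ)) : ℂ) * Complex.exp ((p * θ : ℝ) * Complex.I) := by
    rw [hz, mul_pow, ← Complex.exp_nat_mul]
    push_cast; ring_nf
  have h2 : z ^ p / (p.factorial : ℂ)
      = (((a/2)^p / p.factorial : ℝ) : ℂ) * Complex.exp (((p:ℝ) * θ : ℝ) * Complex.I) := by
    rw [h1]; push_cast; ring
  rw [h2, Complex.im_ofReal_mul, Complex.exp_ofReal_mul_I_im]
  rfl

/-- The total sum of the double series is `exp (a cos θ)`. -/
lemma tsum_FF (a θ : ℝ) : ∑' pq : ℕ × ℕ, FF a θ pq = Real.exp (a * Real.cos θ) := by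
  set z : ℂ := (a/2 : ℝ) * Complex.exp ((θ:ℝ) * Complex.I) with hz
  have h1 : ∑' pq : ℕ × ℕ, FF a θ pq
      = (∑' pq : ℕ × ℕ, gc a θ pq.1 * gc a θ pq.2)
        + ∑' pq : ℕ × ℕ, hs a θ pq.1 * hs a θ pq.2 :=
    Summable.tsum_add (summable_gg a θ) (summable_hh a θ)
  have h2 : ∑' pq : ℕ × ℕ, gc a θ pq.1 * gc a θ pq.2
      = (∑' p, gc a θ p) * ∑' p, gc a θ p :=
    (tsum_mul_tsum_of_summable_norm (summable_norm_gc a θ) (summable_norm_gc a θ)).symm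
  have h3 : ∑' pq : ℕ × ℕ, hs a θ pq.1 * hs a θ pq.2
      = (∑' p, hs a θ p) * ∑' p, hs a θ p :=
    (tsum_mul_tsum_of_summable_norm (summable_norm_hs a θ) (summable_norm_hs a θ)).symm
  rw [h1, h2, h3, tsum_gc, tsum_hs]
  have habs : (Complex.exp z).re ^ 2 + (Complex.exp z).im ^ 2 = ‖Complex.exp z‖ ^ 2 := by
    rw [Complex.sq_norm, Complex.normSq_apply]; ring
  have hre : z.re = a / 2 * Real.cos θ := by
    rw [hz, Complex.re_ofReal_mul, Complex.exp_ofReal_mul_I_re]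
  calc (Complex.exp z).re * (Complex.exp z).re + (Complex.exp z).im * (Complex.exp z).im
      = ‖Complex.exp z‖ ^ 2 := by rw [← habs]; ring
    _ = Real.exp z.re ^ 2 := by rw [Complex.norm_exp]
    _ = Real.exp (a * Real.cos θ) := by
        rw [sq, ← Real.exp_add, hre]; ring_nf
    

lemma FF_symm (p q : ℕ) : FF a θ (p, q) = FF a θ (q, p) := by
  simp only [FF, gc, hs]; ring

lemma FF_diag (m : ℕ) :
    FF a θ (m, m) = (a/2)^(0 + 2*m) / ((m.factorial : ℝ) * (m + 0).factorial) := by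
  simp only [FF, gc, hs, Nat.add_zero, Nat.zero_add]
  rw [show 2*m = m + m by ring, pow_add]
  have key := Real.sin_sq_add_cos_sq ((m:ℝ)*θ)
  linear_combination ((a/2)^m/(m.factorial:ℝ))^2 * key

lemma FF_off (k m : ℕ) :
    FF a θ (m + k + 1, m)
      = (a/2)^((k+1) + 2*m) / ((m.factorial : ℝ) * (m + (k+1)).factorial)
          * Real.cos (((k:ℝ)+1)*θ) := by
  simp only [FF, gc, hs]
  push_cast
  have key : Real.cos (((m:ℝ)+k+1)*θ) * Real.cos ((m:ℝ)*θ)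
      + Real.sin (((m:ℝ)+k+1)*θ) * Real.sin ((m:ℝ)*θ) = Real.cos (((k:ℝ)+1)*θ) := by
    rw [← Real.cos_sub]; congr 1; ring
  have hfac : (m + (k+1)) = (m + k + 1) := by omega
  rw [hfac, show (k+1) + 2*m = (m+k+1) + m by ring, pow_add]
  linear_combination ((a/2)^(m+k+1) * (a/2)^m / ((m.factorial:ℝ) * ((m+k+1).factorial:ℝ))) * key


/-- upper-triangle injection -/
def jU : ℕ × ℕ → ℕ × ℕ := fun km => (km.2 + km.1 + 1, km.2)
def jL : ℕ × ℕ → ℕ × ℕ := fun km => (km.2, km.2 + km.1 + 1)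
def jD : ℕ → ℕ × ℕ := fun m => (m, m)

lemma jU_inj : Function.Injective jU := by
  intro x y h; simp only [jU, Prod.mk.injEq] at h
  obtain ⟨h1, h2⟩ := h; exact Prod.ext (by omega) h2

lemma jL_inj : Function.Injective jL := by
  intro x y h; simp only [jL, Prod.mk.injEq] at h
  obtain ⟨h1, h2⟩ := h; exact Prod.ext (by omega) h1

lemma jD_inj : Function.Injective jD := by
  intro x y h; exact (Prod.ext_iff.1 h).1

noncomputable def DD (a θ : ℝ) : ℕ × ℕ → ℝ := fun pq => if pq.1 = pq.2 then FF a θ pq else 0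
noncomputable def UU (a θ : ℝ) : ℕ × ℕ → ℝ := fun pq => if pq.2 < pq.1 then FF a θ pq else 0
noncomputable def LL (a θ : ℝ) : ℕ × ℕ → ℝ := fun pq => if pq.1 < pq.2 then FF a θ pq else 0

lemma summable_DD : Summable (DD a θ) := by
  refine Summable.of_norm_bounded (summable_FF a θ).abs fun pq => ?_
  simp only [DD]; split_ifs <;> simp [Real.norm_eq_abs, le_abs_self, abs_nonneg]
lemma summable_UU : Summable (UU a θ) := by
  refine Summable.of_norm_bounded (summable_FF a θ).abs fun pq => ?_
  simp only [UU]; split_ifs <;> simp [Real.norm_eq_abs, le_abs_self, abs_nonneg]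
lemma summable_LL : Summable (LL a θ) := by
  refine Summable.of_norm_bounded (summable_FF a θ).abs fun pq => ?_
  simp only [LL]; split_ifs <;> simp [Real.norm_eq_abs, le_abs_self, abs_nonneg]

lemma FF_eq_DUL (pq : ℕ × ℕ) : FF a θ pq = DD a θ pq + UU a θ pq + LL a θ pq := by
  simp only [DD, UU, LL]
  rcases lt_trichotomy pq.1 pq.2 with h | h | h
  · rw [if_neg (by omega), if_neg (by omega), if_pos h]; ring
  · rw [if_pos h, if_neg (by omega), if_neg (by omega)]; ring
  · rw [if_neg (by omega), if_pos h, if_neg (by omega)]; ring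

lemma tsum_DD : ∑' pq : ℕ × ℕ, DD a θ pq = besselI 0 a := by
  have hsupp : Function.support (DD a θ) ⊆ Set.range jD := by
    intro pq hpq
    simp only [Function.mem_support, DD] at hpq
    by_cases h : pq.1 = pq.2
    · exact ⟨pq.1, by simp [jD, Prod.ext_iff, h]⟩
    · exact absurd (if_neg h) hpq
  rw [← jD_inj.tsum_eq hsupp]
  simp only [besselI]
  congr 1; funext m
  simp only [jD, DD, if_pos rfl]
  exact FF_diag a θ m

lemma summable_FFU : Summable (fun km : ℕ × ℕ => FF a θ (km.2 + km.1 + 1, km.2)) :=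
  (summable_FF a θ).comp_injective jU_inj

lemma tsum_UU : ∑' pq : ℕ × ℕ, UU a θ pq
    = ∑' k : ℕ, besselI (k+1) a * Real.cos (((k:ℝ)+1)*θ) := by
  have hsupp : Function.support (UU a θ) ⊆ Set.range jU := by
    intro pq hpq
    simp only [Function.mem_support, UU] at hpq
    by_cases h : pq.2 < pq.1
    · exact ⟨(pq.1 - pq.2 - 1, pq.2), by simp [jU, Prod.ext_iff]; omega⟩
    · exact absurd (if_neg h) hpq
  rw [← jU_inj.tsum_eq hsupp]
  have h1 : ∀ km : ℕ × ℕ, UU a θ (jU km) = FF a θ (km.2 + km.1 + 1, km.2) := by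
    intro km; simp only [UU, jU, if_pos (by omega : km.2 < km.2 + km.1 + 1)]
    exact if_pos (by omega : km.2 < km.2 + km.1 + 1)
  rw [tsum_congr h1, Summable.tsum_prod' (summable_FFU a θ) (fun b => (summable_FFU a θ).prod_factor b)]
  congr 1; funext k
  have h2 : ∀ m : ℕ, FF a θ (m + k + 1, m)
      = (a/2)^((k+1) + 2*m) / ((m.factorial : ℝ) * (m + (k+1)).factorial)
        * Real.cos (((k:ℝ)+1)*θ) := FF_off a θ k
  calc ∑' m : ℕ, FF a θ (m + k + 1, m)
      = ∑' m : ℕ, (a/2)^((k+1) + 2*m) / ((m.factorial : ℝ) * (m + (k+1)).factorial)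
          * Real.cos (((k:ℝ)+1)*θ) := tsum_congr h2
    _ = besselI (k+1) a * Real.cos (((k:ℝ)+1)*θ) := by rw [tsum_mul_right, besselI]

lemma tsum_LL : ∑' pq : ℕ × ℕ, LL a θ pq = ∑' pq : ℕ × ℕ, UU a θ pq := by
  have hsupp : Function.support (LL a θ) ⊆ Set.range jL := by
    intro pq hpq
    simp only [Function.mem_support, LL] at hpq
    by_cases h : pq.1 < pq.2
    · exact ⟨(pq.2 - pq.1 - 1, pq.1), by simp [jL, Prod.ext_iff]; omega⟩
    · exact absurd (if_neg h) hpq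
  have hsupp' : Function.support (UU a θ) ⊆ Set.range jU := by
    intro pq hpq
    simp only [Function.mem_support, UU] at hpq
    by_cases h : pq.2 < pq.1
    · exact ⟨(pq.1 - pq.2 - 1, pq.2), by simp [jU, Prod.ext_iff]; omega⟩
    · exact absurd (if_neg h) hpq
  rw [← jL_inj.tsum_eq hsupp, ← jU_inj.tsum_eq hsupp']
  congr 1; funext km
  simp only [LL, jL, UU, jU, if_pos (by omega : km.2 < km.2 + km.1 + 1),
    if_pos (by omega : km.2 < km.2 + km.1 + 1)]
  refine (if_pos (by omega : km.2 < km.2 + km.1 + 1)).trans ((?_ : _ = _).trans (if_pos (by omega : km.2 < km.2 + km.1 + 1)).symm)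
  exact FF_symm a θ _ _

lemma summable_cheb_terms :
    Summable (fun k : ℕ => besselI (k+1) a * Real.cos (((k:ℝ)+1)*θ)) := by
  have h := (summable_FFU a θ).prod
  refine h.congr fun k => ?_
  calc ∑' m : ℕ, FF a θ (m + k + 1, m)
      = ∑' m : ℕ, (a/2)^((k+1) + 2*m) / ((m.factorial : ℝ) * (m + (k+1)).factorial)
          * Real.cos (((k:ℝ)+1)*θ) := tsum_congr (FF_off a θ k)
    _ = besselI (k+1) a * Real.cos (((k:ℝ)+1)*θ) := by rw [tsum_mul_right, besselI]

theorem expansion : Real.exp (a * Real.cos θ)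
    = besselI 0 a + 2 * ∑' k : ℕ, besselI (k+1) a * Real.cos (((k:ℝ)+1)*θ) := by
  have h := tsum_FF a θ
  rw [tsum_congr (FF_eq_DUL a θ),
    Summable.tsum_add ((summable_DD a θ).add (summable_UU a θ)) (summable_LL a θ),
    Summable.tsum_add (summable_DD a θ) (summable_UU a θ), tsum_DD, tsum_UU, tsum_LL, tsum_UU] at h
  rw [← h]; ring


variable {a : ℝ}

lemma besselI_term_nonneg (ha : 0 ≤ a) (k m : ℕ) :
    0 ≤ (a / 2) ^ (k + 2 * m) / ((m.factorial : ℝ) * (m + k).factorial) := by positivity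

lemma besselI_nonneg (ha : 0 ≤ a) (k : ℕ) : 0 ≤ besselI k a :=
  tsum_nonneg (besselI_term_nonneg ha k)

lemma besselI_term_le (ha : 0 ≤ a) (k m : ℕ) :
    (a / 2) ^ (k + 2 * m) / ((m.factorial : ℝ) * (m + k).factorial)
      ≤ (a/2)^k / (k.factorial : ℝ) * ((a^2/4)^m / (m.factorial : ℝ)) := by
  have h1 : (a/2)^(k + 2*m) = (a/2)^k * (a^2/4)^m := by
    rw [pow_add, pow_mul]; ring_nf
  rw [h1]
  have hk : (k.factorial : ℝ) ≤ ((m + k).factorial : ℝ) := by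
    exact_mod_cast Nat.factorial_le (Nat.le_add_left k m)
  have hkpos : (0:ℝ) < k.factorial := by positivity
  have hmpos : (0:ℝ) < m.factorial := by positivity
  rw [div_mul_div_comm, div_le_div_iff₀ (by positivity) (by positivity)]
  have hnum : 0 ≤ (a/2)^k * (a^2/4)^m := by positivity
  nlinarith [mul_le_mul_of_nonneg_left hk hmpos.le, mul_nonneg hnum (mul_nonneg hmpos.le hkpos.le)]

lemma summable_besselI_term (ha : 0 ≤ a) (k : ℕ) :
    Summable (fun m : ℕ => (a / 2) ^ (k + 2 * m) / ((m.factorial : ℝ) * (m + k).factorial)) := by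
  refine Summable.of_nonneg_of_le (besselI_term_nonneg ha k) (besselI_term_le ha k) ?_
  exact (Real.summable_pow_div_factorial (a^2/4)).mul_left _

lemma besselI_le (ha : 0 ≤ a) (k : ℕ) :
    besselI k a ≤ (a/2)^k / (k.factorial : ℝ) * ∑' m : ℕ, (a^2/4)^m / (m.factorial : ℝ) := by
  rw [besselI, ← tsum_mul_left]
  exact Summable.tsum_le_tsum (fun m => besselI_term_le ha k m) (summable_besselI_term ha k)
    ((Real.summable_pow_div_factorial (a^2/4)).mul_left _)

lemma summable_besselI (ha : 0 ≤ a) : Summable (fun k : ℕ => besselI k a) := by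
  refine Summable.of_nonneg_of_le (besselI_nonneg ha) (besselI_le ha) ?_
  simpa [mul_comm] using
    (Real.summable_pow_div_factorial (a/2)).mul_right (∑' m : ℕ, (a^2/4)^m / (m.factorial : ℝ))

lemma summable_besselI_succ (ha : 0 ≤ a) : Summable (fun k : ℕ => besselI (k+1) a) :=
  (summable_nat_add_iff 1).mpr (summable_besselI ha)

lemma expansion_one (ha : 0 ≤ a) :
    Real.exp a = besselI 0 a + 2 * ∑' k : ℕ, besselI (k+1) a := by
  have h := expansion a 0
  simpa using h

end BesselAux

/-- The Chebyshev partial sum `S_d` of `g(x) = exp (a*(x-1))` is bounded by `1` on `[-1,1]`,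
and approximates `g` there to within the Bessel tail `2 e^{-a} ∑_{k=d+1}^∞ I_k(a)`. -/
theorem stmt6 (a : ℝ) (ha : 0 < a) (d : ℕ) :
    (∀ x ∈ Set.Icc (-1 : ℝ) 1, |chebPartialSum a d x| ≤ 1) ∧
      ∀ x ∈ Set.Icc (-1 : ℝ) 1,
        |Real.exp (a * (x - 1)) - chebPartialSum a d x| ≤
          2 * Real.exp (-a) * ∑' k : ℕ, besselI (d + 1 + k) a := by
  have ha' : (0:ℝ) ≤ a := ha.le
  have hbn := BesselAux.besselI_nonneg ha'
  -- common facts for x ∈ Icc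
  have key : ∀ x ∈ Set.Icc (-1:ℝ) 1,
      (∀ n : ℕ, (Polynomial.Chebyshev.T ℝ ((n:ℤ)+1)).eval x = Real.cos (((n:ℝ)+1) * Real.arccos x))
      ∧ Real.exp (a * x)
        = besselI 0 a + 2 * ∑' k : ℕ, besselI (k+1) a
            * (Polynomial.Chebyshev.T ℝ ((k:ℤ)+1)).eval x := by
    intro x hx
    have hcos : Real.cos (Real.arccos x) = x := Real.cos_arccos hx.1 hx.2
    have hT : ∀ n : ℕ, (Polynomial.Chebyshev.T ℝ ((n:ℤ)+1)).eval x
        = Real.cos (((n:ℝ)+1) * Real.arccos x) := by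
      intro n
      conv_lhs => rw [← hcos]
      rw [Polynomial.Chebyshev.T_real_cos]
      push_cast
      ring_nf
    refine ⟨hT, ?_⟩
    have h := BesselAux.expansion a (Real.arccos x)
    rw [hcos] at h
    rw [h]
    congr 2
    exact tsum_congr fun k => by rw [hT k]
  constructor
  · intro x hx
    obtain ⟨hT, hexp⟩ := key x hx
    have hTle : ∀ n : ℕ, |(Polynomial.Chebyshev.T ℝ ((n:ℤ)+1)).eval x| ≤ 1 := by
      intro n; rw [hT n]; exact Real.abs_cos_le_one _
    have hsum_le : ∑ k ∈ Finset.range d, besselI (k+1) a ≤ ∑' k : ℕ, besselI (k+1) a :=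
      Summable.sum_le_tsum _ (fun k _ => hbn _) (BesselAux.summable_besselI_succ ha')
    have h1 : |chebPartialSum a d x|
        ≤ Real.exp (-a) * besselI 0 a
          + 2 * Real.exp (-a) * ∑ k ∈ Finset.range d, besselI (k+1) a := by
      rw [chebPartialSum]
      refine (abs_add_le _ _).trans ?_
      have e1 : |Real.exp (-a) * besselI 0 a| = Real.exp (-a) * besselI 0 a :=
        abs_of_nonneg (mul_nonneg (Real.exp_pos _).le (hbn 0))
      rw [e1, abs_mul, abs_of_nonneg (by positivity : (0:ℝ) ≤ 2 * Real.exp (-a))]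
      gcongr
      refine (Finset.abs_sum_le_sum_abs _ _).trans ?_
      refine Finset.sum_le_sum fun k _ => ?_
      rw [abs_mul, abs_of_nonneg (hbn _)]
      exact mul_le_of_le_one_right (hbn _) (hTle k)
    have h2 : Real.exp (-a) * besselI 0 a + 2 * Real.exp (-a) * ∑' k : ℕ, besselI (k+1) a = 1 := by
      have hone := BesselAux.expansion_one ha'
      have hmul : Real.exp (-a) * Real.exp a = 1 := by rw [← Real.exp_add]; simp
      calc Real.exp (-a) * besselI 0 a + 2 * Real.exp (-a) * ∑' k : ℕ, besselI (k+1) a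
          = Real.exp (-a) * (besselI 0 a + 2 * ∑' k : ℕ, besselI (k+1) a) := by ring
        _ = Real.exp (-a) * Real.exp a := by rw [← hone]
        _ = 1 := hmul
    calc |chebPartialSum a d x| ≤ _ := h1
      _ ≤ Real.exp (-a) * besselI 0 a + 2 * Real.exp (-a) * ∑' k : ℕ, besselI (k+1) a := by
          gcongr
      _ = 1 := h2
  · intro x hx
    obtain ⟨hT, hexp⟩ := key x hx
    set c : ℕ → ℝ := fun k => besselI (k+1) a * (Polynomial.Chebyshev.T ℝ ((k:ℤ)+1)).eval x with hc
    have hTle : ∀ n : ℕ, |(Polynomial.Chebyshev.T ℝ ((n:ℤ)+1)).eval x| ≤ 1 := by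
      intro n; rw [hT n]; exact Real.abs_cos_le_one _
    have hcs : Summable c := by
      have := BesselAux.summable_cheb_terms a (Real.arccos x)
      refine this.congr fun k => ?_
      rw [hc]; simp only []; rw [hT k]
    have htail : Real.exp (a * (x-1)) - chebPartialSum a d x
        = 2 * Real.exp (-a) * ∑' k : ℕ, c (k + d) := by
      have hsplit : ∑ k ∈ Finset.range d, c k + ∑' k : ℕ, c (k + d) = ∑' k : ℕ, c k :=
        hcs.sum_add_tsum_nat_add d
      have hgx : Real.exp (a * (x-1)) = Real.exp (-a) * Real.exp (a * x) := by
        rw [← Real.exp_add]; ring_nf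
      rw [hgx, hexp, chebPartialSum, ← hsplit]
      ring
    rw [htail]
    have hgoal : |∑' k : ℕ, c (k + d)| ≤ ∑' k : ℕ, besselI (d + 1 + k) a := by
      have hb : ∀ k : ℕ, |c (k + d)| ≤ besselI (d + 1 + k) a := by
        intro k
        rw [hc]; simp only []
        rw [abs_mul, abs_of_nonneg (hbn _), show d + 1 + k = k + d + 1 from by omega]
        exact mul_le_of_le_one_right (hbn _) (hTle _)
      have hsumb : Summable (fun k : ℕ => besselI (d + 1 + k) a) := by
        have := (summable_nat_add_iff (d+1)).mpr (BesselAux.summable_besselI ha')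
        refine this.congr fun k => ?_
        congr 1; omega
      have habs : Summable (fun k : ℕ => |c (k + d)|) :=
        Summable.of_nonneg_of_le (fun _ => abs_nonneg _) hb hsumb
      calc |∑' k : ℕ, c (k + d)| ≤ ∑' k : ℕ, |c (k + d)| := by
            simpa [Real.norm_eq_abs] using norm_tsum_le_tsum_norm (f := fun k => c (k + d)) habs
        _ ≤ ∑' k : ℕ, besselI (d + 1 + k) a := Summable.tsum_le_tsum hb habs hsumb
    rw [abs_mul, abs_of_nonneg (by positivity : (0:ℝ) ≤ 2 * Real.exp (-a))]
    exact mul_le_mul_of_nonneg_left hgoal (by positivity)
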